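/- Let L be a first-order language extending the language of rings whose only function symbols are those of the language of rings, and let K be a field carrying a non-trivial valuation, which is an L-structure admitting quantifier elimination and equipped with the topological system in which each K^n carries the product of the valuation topology on K (and this satisfies the topological system axioms: term maps are continuous, singletons are closed, and the relation sets with nonzero coordinates are open), and such that every nonempty special open subset of K is infinite. For a nonempty L-definable subset S of K^n, let dim S denote the largest integer k ≥ 0 such that the image of S under some coordinate projection K^n → K^k has nonempty interior in K^k. Then for every L-definable subset E of K^n with nonempty frontier ∂E = cl(E) \ E, one has dim(∂E) < dim(E). -/

import Mathlib

set_option linter.unusedSectionVars false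
set_option linter.unreachableTactic false
set_option linter.unusedTactic false
set_option linter.unnecessarySimpa false
set_option linter.unusedVariables false
set_option maxHeartbeats 2000000
set_option synthInstance.maxHeartbeats 400000

open FirstOrder


/-- A *basic special open* subset of `K^n`: either the nonzero set of an `L(K)`-term, or
the set where the relation symbol `R` holds (respectively fails) at the point whose
`i_j`-th coordinate is `t_{i_j}(a)` and whose other coordinates are `0`, with all
`t_{i_j}(a) ≠ 0`.  Here `L = ring ⊕ Lrel` and parameters from `K` are represented by
extra variables evaluated via `id`. -/
def IsBasicSpecialOpen (Lrel : FirstOrder.Language) (K : Type*) [CommRing K]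
    [FirstOrder.Ring.CompatibleRing K] [Lrel.Structure K] {n : ℕ}
    (S : Set (Fin n → K)) : Prop :=
  (∃ t : (FirstOrder.Language.ring.sum Lrel).Term (Fin n ⊕ K),
      S = {a : Fin n → K | t.realize (Sum.elim a id) ≠ 0}) ∨
  (∃ (m k : ℕ) (R : Lrel.Relations m) (j : Fin k → Fin m), StrictMono j ∧
    ∃ t : Fin k → (FirstOrder.Language.ring.sum Lrel).Term (Fin n ⊕ K),
      S = {a : Fin n → K | (∀ l, (t l).realize (Sum.elim a id) ≠ 0) ∧
            FirstOrder.Language.Structure.RelMap R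
              (Function.extend j (fun l => (t l).realize (Sum.elim a id)) 0)} ∨
      S = {a : Fin n → K | (∀ l, (t l).realize (Sum.elim a id) ≠ 0) ∧
            ¬ FirstOrder.Language.Structure.RelMap R
              (Function.extend j (fun l => (t l).realize (Sum.elim a id)) 0)})

/-- A *special open* subset of `K^n`: a finite intersection of basic special open sets. -/
def IsSpecialOpen (Lrel : FirstOrder.Language) (K : Type*) [CommRing K]
    [FirstOrder.Ring.CompatibleRing K] [Lrel.Structure K] {n : ℕ}
    (S : Set (Fin n → K)) : Prop :=
  ∃ (s : ℕ) (U : Fin s → Set (Fin n → K)),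
    (∀ i, IsBasicSpecialOpen Lrel K (U i)) ∧ S = ⋂ i, U i

/-- The dimension of a subset `S ⊆ K^n`: the largest `k ≥ 0` such that the image of `S`
under some coordinate projection `K^n → K^k` has nonempty interior in `K^k` (each `K^m`
carrying the product topology). -/
noncomputable def projDim {K : Type*} [TopologicalSpace K] {n : ℕ}
    (S : Set (Fin n → K)) : ℕ :=
  sSup {k : ℕ | ∃ j : Fin k → Fin n, StrictMono j ∧
    (interior ((fun x : Fin n → K => x ∘ j) '' S)).Nonempty}



open FirstOrder.Language FirstOrder.Language.Structure

namespace PC7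

variable {Lrel : FirstOrder.Language} [Lrel.IsRelational]
variable {K : Type*} [Field K]
variable [FirstOrder.Ring.CompatibleRing K] [Lrel.Structure K]

section ValuedTopology

variable {Γ₀ : Type*} [LinearOrderedCommGroupWithZero Γ₀] [Valued K Γ₀]


theorem t1_of_hsingleton (hs : ∀ a : K, IsClosed {x : Fin 1 → K | x 0 = a}) : T1Space K := by
  refine ⟨fun a => ?_⟩
  have : ({a} : Set K) = (fun x : K => (fun _ : Fin 1 => x)) ⁻¹' {x : Fin 1 → K | x 0 = a} := by
    ext y; simp
  rw [this]
  exact (hs a).preimage (by continuity)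

theorem discrete_of_zero_open (h : IsOpen ({(0 : K)} : Set K)) : DiscreteTopology K := by
  rw [discreteTopology_iff_isOpen_singleton]
  intro a
  have : ({a} : Set K) = (Homeomorph.addLeft a) '' {0} := by simp
  rw [this]
  exact (Homeomorph.addLeft a).isOpen_image.2 h

theorem integers_infinite [Infinite K] : {x : K | Valued.v x ≤ (1 : Γ₀)}.Infinite := by
  intro hfin
  have h2 : {x : K | (1:Γ₀) < Valued.v x}.Finite := by
    refine Set.Finite.subset (hfin.image (fun x : K => x⁻¹)) ?_
    intro x hx
    have hx1 : (1:Γ₀) < Valued.v x := hx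
    refine ⟨x⁻¹, ?_, by simp⟩
    simp only [Set.mem_setOf_eq, map_inv₀]
    exact inv_le_one_of_one_le₀ hx1.le
  have : (Set.univ : Set K).Finite := by
    refine Set.Finite.subset (hfin.union h2) ?_
    intro x _
    rcases le_or_gt (Valued.v x) (1:Γ₀) with h | h
    · exact Or.inl h
    · exact Or.inr h
  exact Set.infinite_univ this

theorem open_infinite [Infinite K] (hnd : ¬ IsOpen ({(0 : K)} : Set K))
    {O : Set K} (hO : IsOpen O) (hne : O.Nonempty) : O.Infinite := by
  obtain ⟨a, ha⟩ := hne
  obtain ⟨γ', hγ'⟩ := Valued.mem_nhds.1 (hO.mem_nhds ha)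
  set γ : Γ₀ := MonoidWithZeroHom.ValueGroup₀.embedding γ'.1
  have hγ : {y : K | Valued.v (y - a) < γ} ⊆ O :=
    fun y hy => hγ' ((Valuation.restrict_lt_iff_lt_embedding _).2 hy)
  have hball : ∃ b : K, b ≠ 0 ∧ Valued.v b < (γ : Γ₀) := by
    by_contra h
    push_neg at h
    apply hnd
    rw [isOpen_iff_mem_nhds]
    rintro x rfl
    rw [Valued.mem_nhds]
    refine ⟨γ', fun y hy => ?_⟩
    have hy : Valued.v y < γ := by simpa using (Valuation.restrict_lt_iff_lt_embedding _).1 hy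
    by_contra hy0
    exact absurd (h y (by simpa using hy0)) (not_le.2 hy)
  obtain ⟨b, hb0, hbγ⟩ := hball
  have hinj : Set.InjOn (fun x : K => a + x * b) {x : K | Valued.v x ≤ 1} := by
    intro x _ y _ hxy
    simp only [add_right_inj] at hxy
    exact mul_right_cancel₀ hb0 hxy
  have hsub : (fun x : K => a + x * b) '' {x : K | Valued.v x ≤ 1} ⊆ O := by
    rintro _ ⟨x, hx, rfl⟩
    apply hγ
    simp only [Set.mem_setOf_eq, add_sub_cancel_left]
    calc Valued.v (x * b) = Valued.v x * Valued.v b := map_mul _ _ _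
    _ ≤ 1 * Valued.v b := mul_le_mul_left hx _
    _ = Valued.v b := one_mul _
    _ < γ := hbγ
  exact Set.Infinite.mono hsub ((integers_infinite (K := K) (Γ₀ := Γ₀)).image hinj)

theorem exists_box {m : ℕ} {O : Set (Fin m → K)} (hO : IsOpen O) (hne : O.Nonempty) :
    ∃ B : Fin m → Set K, (∀ i, IsOpen (B i) ∧ (B i).Nonempty) ∧ Set.pi Set.univ B ⊆ O := by
  obtain ⟨a, ha⟩ := hne
  obtain ⟨I, u, hu, hsub⟩ := isOpen_pi_iff.1 hO a ha
  refine ⟨fun i => if i ∈ I then u i else Set.univ, fun i => ?_, ?_⟩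
  · by_cases hi : i ∈ I
    · simp only [hi, if_pos]
      exact ⟨(hu i hi).1, ⟨a i, (hu i hi).2⟩⟩
    · simp only [hi, if_neg, not_false_iff]
      exact ⟨isOpen_univ, ⟨a i, trivial⟩⟩
  · intro x hx
    apply hsub
    intro i hi
    have := hx i (Set.mem_univ i)
    simp only [Finset.mem_coe] at hi
    simpa only [if_pos hi] using this

theorem poly_vanish_box : ∀ {m : ℕ} (S : Fin m → Set K), (∀ i, (S i).Infinite) →
    ∀ (q : MvPolynomial (Fin m) K), (∀ a ∈ Set.pi Set.univ S, MvPolynomial.eval a q = 0) → q = 0 := by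
  intro m
  induction m with
  | zero =>
    intro S _ q hq
    rw [MvPolynomial.eq_C_of_isEmpty q]
    have h0 : MvPolynomial.eval (fun i => (Fin.elim0 i : K)) q = 0 :=
      hq _ (by intro i; exact Fin.elim0 i)
    rw [MvPolynomial.eq_C_of_isEmpty q, MvPolynomial.eval_C] at h0
    rw [h0, map_zero]
  | succ m ih =>
    intro S hS q hq
    have hq' : MvPolynomial.finSuccEquiv K m q = 0 := by
      apply Polynomial.ext
      intro d
      simp only [Polynomial.coeff_zero]
      apply ih (fun i => S i.succ) (fun i => hS i.succ)
      intro b hb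
      have hPb : Polynomial.map (MvPolynomial.eval b) (MvPolynomial.finSuccEquiv K m q) = 0 := by
        apply Polynomial.eq_zero_of_infinite_isRoot
        apply Set.Infinite.mono _ (hS 0)
        intro y hy
        simp only [Set.mem_setOf_eq, Polynomial.IsRoot.def]
        rw [← MvPolynomial.eval_eq_eval_mv_eval']
        apply hq
        intro i _
        refine Fin.cases ?_ ?_ i
        · simpa using hy
        · intro j
          simpa using hb j (Set.mem_univ j)
      have := congrArg (fun P => Polynomial.coeff P d) hPb
      simpa [Polynomial.coeff_map] using this
    have := congrArg (MvPolynomial.finSuccEquiv K m).symm hq'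
    simpa using this


end ValuedTopology


variable {Lrel : FirstOrder.Language} [Lrel.IsRelational]
variable {K : Type*} [Field K]
variable [FirstOrder.Ring.CompatibleRing K] [Lrel.Structure K]


noncomputable def tpoly {n : ℕ} : (Language.ring.sum Lrel).Term (Fin n ⊕ K) → MvPolynomial (Fin n) K
  | .var (Sum.inl i) => MvPolynomial.X i
  | .var (Sum.inr c) => MvPolynomial.C c
  | .func f ts =>
    match f with
    | Sum.inl f' =>
      match f' with
      | .add => tpoly (ts 0) + tpoly (ts 1)
      | .mul => tpoly (ts 0) * tpoly (ts 1)
      | .neg => - tpoly (ts 0)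
      | .zero => 0
      | .one => 1
    | Sum.inr f' => isEmptyElim f'

theorem tpoly_realize {n : ℕ} (t : (Language.ring.sum Lrel).Term (Fin n ⊕ K)) (a : Fin n → K) :
    t.realize (Sum.elim a id) = MvPolynomial.eval a (tpoly t) := by
  induction t with
  | var v => cases v <;> simp [tpoly]
  | func f ts ih =>
    rcases f with f' | f'
    · cases f' <;> simp [tpoly, Term.realize, ih]
      all_goals erw [funMap_sumInl]
      · exact Ring.CompatibleRing.funMap_add _
      · exact Ring.CompatibleRing.funMap_mul _
      · exact Ring.CompatibleRing.funMap_neg _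
      · exact Ring.CompatibleRing.funMap_zero _
      · exact Ring.CompatibleRing.funMap_one _
    · exact isEmptyElim f'

/-- A relation condition in a cell. -/
structure RelCond (Lrel : FirstOrder.Language) (K : Type*) (n : ℕ) where
  m : ℕ
  k : ℕ
  R : Lrel.Relations m
  j : Fin k → Fin m
  hj : StrictMono j
  t : Fin k → (Language.ring.sum Lrel).Term (Fin n ⊕ K)
  pos : Bool

variable {n : ℕ}

def RelCond.vals (r : RelCond Lrel K n) (a : Fin n → K) : Fin r.k → K :=
  fun l => (r.t l).realize (Sum.elim a id)

def RelCond.set (r : RelCond Lrel K n) : Set (Fin n → K) :=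
  {a | (∀ l, r.vals a l ≠ 0) ∧
    (Structure.RelMap r.R (Function.extend r.j (r.vals a) 0) ↔ r.pos = true)}

def RelCond.flip (r : RelCond Lrel K n) : RelCond Lrel K n := {r with pos := !r.pos}

theorem RelCond.flip_vals (r : RelCond Lrel K n) : r.flip.vals = r.vals := rfl

theorem RelCond.set_disjoint (r : RelCond Lrel K n) : r.set ∩ r.flip.set = ∅ := by
  ext a
  simp only [Set.mem_inter_iff, Set.mem_empty_iff_false, iff_false]
  rintro ⟨⟨_, h1⟩, ⟨_, h2⟩⟩
  have h2' : (Structure.RelMap r.R (Function.extend r.j (r.vals a) 0) ↔ (!r.pos) = true) := h2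
  rw [h1] at h2'
  cases hp : r.pos <;> rw [hp] at h2' <;> simp at h2' 

theorem RelCond.not_mem (r : RelCond Lrel K n) (a : Fin n → K) (h : a ∉ r.set) :
    (∃ l, r.vals a l = 0) ∨ a ∈ r.flip.set := by
  by_cases h0 : ∀ l, r.vals a l ≠ 0
  · right
    refine ⟨h0, ?_⟩
    have hni : ¬ (Structure.RelMap r.R (Function.extend r.j (r.vals a) 0) ↔ r.pos = true) :=
      fun hc => h ⟨h0, hc⟩
    show Structure.RelMap r.R (Function.extend r.j (r.vals a) 0) ↔ (!r.pos) = true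
    cases hp : r.pos <;> rw [hp] at hni <;> simp_all
  · left
    push_neg at h0
    exact h0

structure Cell (Lrel : FirstOrder.Language) (K : Type*) (n : ℕ) where
  zs : List ((Language.ring.sum Lrel).Term (Fin n ⊕ K))
  nzs : List ((Language.ring.sum Lrel).Term (Fin n ⊕ K))
  rels : List (RelCond Lrel K n)

def Cell.set (c : Cell Lrel K n) : Set (Fin n → K) :=
  {a | (∀ t ∈ c.zs, t.realize (Sum.elim a id) = (0 : K)) ∧
       (∀ t ∈ c.nzs, t.realize (Sum.elim a id) ≠ (0 : K)) ∧
       (∀ r ∈ c.rels, a ∈ RelCond.set r)}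

def cellsSet (cs : List (Cell Lrel K n)) : Set (Fin n → K) :=
  {a | ∃ c ∈ cs, a ∈ c.set}

theorem cellsSet_append (cs ds : List (Cell Lrel K n)) :
    cellsSet (cs ++ ds) = cellsSet cs ∪ cellsSet ds := by
  ext a
  simp only [cellsSet, List.mem_append, Set.mem_setOf_eq, Set.mem_union]
  constructor
  · rintro ⟨c, (h | h), hc⟩
    · exact Or.inl ⟨c, h, hc⟩
    · exact Or.inr ⟨c, h, hc⟩
  · rintro (⟨c, h, hc⟩ | ⟨c, h, hc⟩)
    · exact ⟨c, Or.inl h, hc⟩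
    · exact ⟨c, Or.inr h, hc⟩

def Cell.inter (c d : Cell Lrel K n) : Cell Lrel K n :=
  ⟨c.zs ++ d.zs, c.nzs ++ d.nzs, c.rels ++ d.rels⟩

theorem Cell.inter_set (c d : Cell Lrel K n) : (c.inter d).set = c.set ∩ d.set := by
  ext a
  simp only [Cell.set, Cell.inter, List.mem_append, Set.mem_inter_iff, Set.mem_setOf_eq]
  constructor
  · rintro ⟨h1, h2, h3⟩
    exact ⟨⟨fun t ht => h1 t (Or.inl ht), fun t ht => h2 t (Or.inl ht), fun r hr => h3 r (Or.inl hr)⟩,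
      ⟨fun t ht => h1 t (Or.inr ht), fun t ht => h2 t (Or.inr ht), fun r hr => h3 r (Or.inr hr)⟩⟩
  · rintro ⟨⟨h1, h2, h3⟩, ⟨h1', h2', h3'⟩⟩
    refine ⟨fun t ht => ht.elim (h1 t) (h1' t), fun t ht => ht.elim (h2 t) (h2' t),
      fun r hr => hr.elim (h3 r) (h3' r)⟩

def interLists (cs ds : List (Cell Lrel K n)) : List (Cell Lrel K n) :=
  cs.flatMap fun c => ds.map fun d => c.inter d

theorem interLists_set (cs ds : List (Cell Lrel K n)) :
    cellsSet (interLists cs ds) = cellsSet cs ∩ cellsSet ds := by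
  ext a
  simp only [cellsSet, interLists, List.mem_flatMap, List.mem_map, Set.mem_inter_iff,
    Set.mem_setOf_eq]
  constructor
  · rintro ⟨e, ⟨c, hc, d, hd, rfl⟩, he⟩
    rw [Cell.inter_set] at he
    exact ⟨⟨c, hc, he.1⟩, ⟨d, hd, he.2⟩⟩
  · rintro ⟨⟨c, hc, hac⟩, ⟨d, hd, had⟩⟩
    exact ⟨c.inter d, ⟨c, hc, d, hd, rfl⟩, by rw [Cell.inter_set]; exact ⟨hac, had⟩⟩

def zeroCell (t : (Language.ring.sum Lrel).Term (Fin n ⊕ K)) : Cell Lrel K n := ⟨[t], [], []⟩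
def nzCell (t : (Language.ring.sum Lrel).Term (Fin n ⊕ K)) : Cell Lrel K n := ⟨[], [t], []⟩
def relCell (r : RelCond Lrel K n) : Cell Lrel K n := ⟨[], [], [r]⟩

@[simp] theorem zeroCell_set (t) :
    (zeroCell (Lrel := Lrel) (K := K) (n := n) t).set = {a | t.realize (Sum.elim a id) = (0:K)} := by
  ext a; simp [zeroCell, Cell.set]

@[simp] theorem nzCell_set (t) :
    (nzCell (Lrel := Lrel) (K := K) (n := n) t).set = {a | t.realize (Sum.elim a id) ≠ (0:K)} := by
  ext a; simp [nzCell, Cell.set]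

@[simp] theorem relCell_set (r : RelCond Lrel K n) : (relCell r).set = r.set := by
  ext a; simp [relCell, Cell.set]

def complRel (r : RelCond Lrel K n) : List (Cell Lrel K n) :=
  (List.ofFn fun l : Fin r.k => zeroCell (r.t l)) ++ [relCell r.flip]

theorem complRel_set (r : RelCond Lrel K n) : cellsSet (complRel r) = (RelCond.set r)ᶜ := by
  ext a
  simp only [complRel, cellsSet, List.mem_append, List.mem_ofFn, Set.mem_setOf_eq,
    Set.mem_compl_iff, List.mem_singleton]
  constructor
  · rintro ⟨c, (⟨l, rfl⟩ | rfl), hc⟩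
    · rw [zeroCell_set] at hc
      intro hr
      exact hr.1 l hc
    · intro hr
      rw [relCell_set] at hc
      have := r.set_disjoint
      rw [Set.eq_empty_iff_forall_notMem] at this
      exact this a ⟨hr, hc⟩
  · intro h
    rcases r.not_mem a h with ⟨l, hl⟩ | hfl
    · exact ⟨zeroCell (r.t l), Or.inl ⟨l, rfl⟩, by rw [zeroCell_set]; exact hl⟩
    · exact ⟨relCell r.flip, Or.inr rfl, by rw [relCell_set]; exact hfl⟩

def complCell (c : Cell Lrel K n) : List (Cell Lrel K n) :=
  c.zs.map nzCell ++ c.nzs.map zeroCell ++ c.rels.flatMap complRel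

theorem complCell_set (c : Cell Lrel K n) : cellsSet (complCell c) = (c.set)ᶜ := by
  ext a
  simp only [complCell, cellsSet, Set.mem_compl_iff, Set.mem_setOf_eq, List.mem_append,
    List.mem_map, List.mem_flatMap]
  constructor
  · rintro ⟨e, ((⟨t, ht, rfl⟩ | ⟨t, ht, rfl⟩) | ⟨r, hr, hre⟩), he⟩
    · rw [nzCell_set] at he
      rintro ⟨h1, _, _⟩
      exact he (h1 t ht)
    · rw [zeroCell_set] at he
      rintro ⟨_, h2, _⟩
      exact h2 t ht he
    · intro hc
      have har : a ∈ RelCond.set r := hc.2.2 r hr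
      have : a ∈ cellsSet (complRel r) := ⟨e, hre, he⟩
      rw [complRel_set] at this
      exact this har
  · intro h
    by_cases h1 : ∀ t ∈ c.zs, t.realize (Sum.elim a id) = (0:K)
    · by_cases h2 : ∀ t ∈ c.nzs, t.realize (Sum.elim a id) ≠ (0:K)
      · have h3 : ¬ ∀ r ∈ c.rels, a ∈ RelCond.set r := fun h3 => h ⟨h1, h2, h3⟩
        push_neg at h3
        obtain ⟨r, hr, har⟩ := h3
        have : a ∈ cellsSet (complRel r) := by rw [complRel_set]; exact har
        obtain ⟨e, he, hae⟩ := this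
        exact ⟨e, Or.inr ⟨r, hr, he⟩, hae⟩
      · push_neg at h2
        obtain ⟨t, ht, h0⟩ := h2
        exact ⟨zeroCell t, Or.inl (Or.inr ⟨t, ht, rfl⟩), by rw [zeroCell_set]; exact h0⟩
    · push_neg at h1
      obtain ⟨t, ht, h0⟩ := h1
      exact ⟨nzCell t, Or.inl (Or.inl ⟨t, ht, rfl⟩), by rw [nzCell_set]; exact h0⟩

def univCell : Cell Lrel K n := ⟨[], [], []⟩

@[simp] theorem univCell_set : (univCell : Cell Lrel K n).set = Set.univ := by
  ext a; simp [univCell, Cell.set]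

def complLists (cs : List (Cell Lrel K n)) : List (Cell Lrel K n) :=
  cs.foldr (fun c acc => interLists (complCell c) acc) [univCell]

theorem complLists_set (cs : List (Cell Lrel K n)) :
    cellsSet (complLists cs) = (cellsSet cs)ᶜ := by
  induction cs with
  | nil =>
    ext a
    simp [complLists, cellsSet, univCell, Cell.set]
  | cons c cs ih =>
    have : cellsSet (c :: cs) = c.set ∪ cellsSet cs := by
      ext a
      simp only [cellsSet, List.mem_cons, Set.mem_setOf_eq, Set.mem_union]
      constructor
      · rintro ⟨d, (rfl | hd), had⟩
        · exact Or.inl had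
        · exact Or.inr ⟨d, hd, had⟩
      · rintro (h | ⟨d, hd, had⟩)
        · exact ⟨c, Or.inl rfl, h⟩
        · exact ⟨d, Or.inr hd, had⟩
    rw [this, Set.compl_union]
    show cellsSet (interLists (complCell c) (complLists cs)) = _
    rw [interLists_set, complCell_set, ih]

theorem cellsSet_cons (c : Cell Lrel K n) (cs : List (Cell Lrel K n)) :
    cellsSet (c :: cs) = c.set ∪ cellsSet cs := by
  ext a
  simp only [cellsSet, List.mem_cons, Set.mem_setOf_eq, Set.mem_union]
  constructor
  · rintro ⟨d, (rfl | hd), had⟩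
    · exact Or.inl had
    · exact Or.inr ⟨d, hd, had⟩
  · rintro (h | ⟨d, hd, had⟩)
    · exact ⟨c, Or.inl rfl, h⟩
    · exact ⟨d, Or.inr hd, had⟩

-- continue

def tsub (t₁ t₂ : (Language.ring.sum Lrel).Term (Fin n ⊕ K)) :
    (Language.ring.sum Lrel).Term (Fin n ⊕ K) :=
  Term.func (Sum.inl Ring.addFunc) ![t₁, Term.func (Sum.inl Ring.negFunc) ![t₂] ]

theorem tpoly_tsub (t₁ t₂ : (Language.ring.sum Lrel).Term (Fin n ⊕ K)) :
    tpoly (tsub t₁ t₂) = tpoly t₁ - tpoly t₂ := by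
  show tpoly t₁ + (- tpoly t₂) = _
  ring

theorem realize_tsub (t₁ t₂ : (Language.ring.sum Lrel).Term (Fin n ⊕ K)) (a : Fin n → K) :
    (tsub t₁ t₂).realize (Sum.elim a id) =
      t₁.realize (Sum.elim a id) - t₂.realize (Sum.elim a id) := by
  rw [tpoly_realize, tpoly_realize, tpoly_realize, tpoly_tsub, map_sub]

/-- The index-set splitting cell for a relation atom. -/
noncomputable def cellOfSubset {l : ℕ} (R : Lrel.Relations l)
    (ts : Fin l → (Language.ring.sum Lrel).Term (Fin n ⊕ K)) (I : Finset (Fin l)) :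
    Cell Lrel K n :=
  ⟨(Finset.univ \ I).toList.map ts, [],
    [⟨l, I.card, R, fun l' => I.orderEmbOfFin rfl l', (I.orderEmbOfFin rfl).strictMono,
      fun l' => ts (I.orderEmbOfFin rfl l'), true⟩]⟩

theorem extend_eq_of_zero {l : ℕ} (I : Finset (Fin l)) (w : Fin l → K)
    (h0 : ∀ i ∉ I, w i = 0) :
    Function.extend (fun l' => (I.orderEmbOfFin rfl l' : Fin l))
      (fun l' => w (I.orderEmbOfFin rfl l')) 0 = w := by
  funext i
  by_cases hi : i ∈ I
  · have : i ∈ Set.range (I.orderEmbOfFin rfl) := by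
      rw [Finset.range_orderEmbOfFin]
      exact hi
    obtain ⟨l', rfl⟩ := this
    rw [Function.Injective.extend_apply (I.orderEmbOfFin rfl).injective]
  · rw [Function.extend_apply']
    · exact (h0 i hi).symm
    · rintro ⟨l', rfl⟩
      exact hi (Finset.orderEmbOfFin_mem I rfl l')

theorem mem_cellOfSubset {l : ℕ} (R : Lrel.Relations l)
    (ts : Fin l → (Language.ring.sum Lrel).Term (Fin n ⊕ K)) (I : Finset (Fin l))
    (a : Fin n → K) :
    a ∈ (cellOfSubset R ts I).set ↔
      ((∀ i ∉ I, (ts i).realize (Sum.elim a id) = (0:K)) ∧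
       (∀ i ∈ I, (ts i).realize (Sum.elim a id) ≠ (0:K)) ∧
       Structure.RelMap R (fun i => (ts i).realize (Sum.elim a id))) := by
  set w : Fin l → K := fun i => (ts i).realize (Sum.elim a id) with hw
  constructor
  · rintro ⟨h1, _, h3⟩
    have hr := h3 _ (List.mem_singleton_self _)
    obtain ⟨hnz, hiff⟩ := hr
    have h0 : ∀ i ∉ I, w i = 0 := by
      intro i hi
      exact h1 (ts i) (List.mem_map_of_mem (f := ts) (by rw [Finset.mem_toList]; simp [hi]))
    have hext := extend_eq_of_zero I w h0
    refine ⟨h0, ?_, ?_⟩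
    · intro i hi
      have : i ∈ Set.range (I.orderEmbOfFin rfl) := by
        rw [Finset.range_orderEmbOfFin]; exact hi
      obtain ⟨l', rfl⟩ := this
      exact hnz l'
    · have := hiff.2 rfl
      rwa [show (RelCond.vals ⟨l, I.card, R, fun l' => I.orderEmbOfFin rfl l',
        (I.orderEmbOfFin rfl).strictMono, fun l' => ts (I.orderEmbOfFin rfl l'), true⟩ a) =
        (fun l' => w (I.orderEmbOfFin rfl l')) from rfl, hext] at this
  · rintro ⟨h0, hnz, hR⟩
    refine ⟨?_, ?_, ?_⟩
    · intro t ht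
      simp only [cellOfSubset, List.mem_map, Finset.mem_toList, Finset.mem_sdiff,
        Finset.mem_univ, true_and] at ht
      obtain ⟨i, hi, rfl⟩ := ht
      exact h0 i hi
    · intro t ht
      simp only [cellOfSubset, List.not_mem_nil] at ht
    · intro r hr
      simp only [cellOfSubset, List.mem_singleton] at hr
      subst hr
      have hext := extend_eq_of_zero I w h0
      refine ⟨?_, ?_⟩
      · intro l'
        exact hnz _ (Finset.orderEmbOfFin_mem I rfl l')
      · rw [show (RelCond.vals ⟨l, I.card, R, fun l' => I.orderEmbOfFin rfl l',
          (I.orderEmbOfFin rfl).strictMono, fun l' => ts (I.orderEmbOfFin rfl l'), true⟩ a) =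
          (fun l' => w (I.orderEmbOfFin rfl l')) from rfl, hext]
        simpa using hR

theorem atomicRel_set {l : ℕ} (R : Lrel.Relations l)
    (ts : Fin l → (Language.ring.sum Lrel).Term (Fin n ⊕ K)) :
    {a : Fin n → K | Structure.RelMap R (fun i => (ts i).realize (Sum.elim a id))} =
      cellsSet ((Finset.univ : Finset (Finset (Fin l))).toList.map (cellOfSubset R ts)) := by
  classical
  ext a
  simp only [Set.mem_setOf_eq, cellsSet, List.mem_map, Finset.mem_toList, Finset.mem_univ,
    true_and]
  constructor
  · intro hR
    refine ⟨cellOfSubset R ts (Finset.univ.filter fun i => (ts i).realize (Sum.elim a id) ≠ 0),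
      ⟨_, rfl⟩, ?_⟩
    rw [mem_cellOfSubset]
    refine ⟨?_, ?_, hR⟩
    · intro i hi
      simp only [Finset.mem_filter, Finset.mem_univ, true_and, not_not] at hi
      exact hi
    · intro i hi
      simp only [Finset.mem_filter, Finset.mem_univ, true_and] at hi
      exact hi
  · rintro ⟨c, ⟨I, rfl⟩, hc⟩
    rw [mem_cellOfSubset] at hc
    exact hc.2.2

theorem qf_decomp {φ : (Language.ring.sum Lrel).BoundedFormula (Fin n ⊕ K) 0}
    (h : φ.IsQF) :
    ∃ cs : List (Cell Lrel K n),
      {a : Fin n → K | φ.Realize (Sum.elim a id) (default : Fin 0 → K)} = cellsSet cs := by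
  induction h with
  | falsum =>
    refine ⟨[], ?_⟩
    ext a
    simp [cellsSet, BoundedFormula.Realize]
  | @of_isAtomic φ h =>
    cases h with
    | equal t₁ t₂ =>
      refine ⟨[zeroCell (tsub (t₁.relabel (Sum.elim id Fin.elim0))
        (t₂.relabel (Sum.elim id Fin.elim0)))], ?_⟩
      ext a
      rw [cellsSet_cons]
      simp only [Set.mem_setOf_eq, BoundedFormula.realize_bdEqual, Set.mem_union,
        zeroCell_set, cellsSet, List.not_mem_nil, false_and, exists_false,
        Set.mem_setOf_eq, or_false]
      rw [realize_tsub, Term.realize_relabel, Term.realize_relabel]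
      have hvg : (Sum.elim a id) ∘ (Sum.elim id Fin.elim0) =
          Sum.elim (Sum.elim a id) (default : Fin 0 → K) := by
        funext x
        rcases x with x | x
        · rfl
        · exact x.elim0
      rw [hvg]
      rw [sub_eq_zero]
    | @rel l R ts =>
      rcases R with R | R
      · exact isEmptyElim R
      · refine ⟨(Finset.univ : Finset (Finset (Fin l))).toList.map
          (cellOfSubset R (fun i => (ts i).relabel (Sum.elim id Fin.elim0))), ?_⟩
        rw [← atomicRel_set]
        ext a
        simp only [Set.mem_setOf_eq]
        change Structure.RelMap (L := Language.ring.sum Lrel) (M := K) (Sum.inr R)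
          (fun i => (ts i).realize (Sum.elim (Sum.elim a id) (default : Fin 0 → K))) ↔ _
        have hvg : ∀ i, (ts i).realize (Sum.elim (Sum.elim a id) (default : Fin 0 → K)) =
            ((ts i).relabel (Sum.elim id Fin.elim0)).realize (Sum.elim a id) := by
          intro i
          rw [Term.realize_relabel]
          congr 1
          funext x
          rcases x with x | x
          · rfl
          · exact x.elim0
        have : Structure.RelMap (L := Language.ring.sum Lrel) (M := K) (Sum.inr R) =
            Structure.RelMap (L := Lrel) (M := K) R := rfl
        rw [this]
        have harg : (fun i => (ts i).realize (Sum.elim (Sum.elim a id) (default : Fin 0 → K))) =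
            (fun i => ((ts i).relabel (Sum.elim id Fin.elim0)).realize (Sum.elim a id)) := by
          funext i
          rw [hvg]
        rw [harg]
  | imp h₁ h₂ ih₁ ih₂ =>
    obtain ⟨cs₁, hcs₁⟩ := ih₁
    obtain ⟨cs₂, hcs₂⟩ := ih₂
    refine ⟨complLists cs₁ ++ cs₂, ?_⟩
    rw [cellsSet_append, complLists_set, ← hcs₁, ← hcs₂]
    ext a
    simp only [Set.mem_setOf_eq, BoundedFormula.realize_imp, Set.mem_union, Set.mem_compl_iff,
      Set.mem_setOf_eq]
    tauto

/-! ### Algebraic independence over a set, and the key extension lemma -/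

section IndepSection

variable {n : ℕ}

/-- Polynomial continuity. -/
theorem continuous_eval [TopologicalSpace K] [IsTopologicalRing K] {m : ℕ}
    (q : MvPolynomial (Fin m) K) :
    Continuous fun a : Fin m → K => MvPolynomial.eval a q := by
  induction q using MvPolynomial.induction_on with
  | C c => simpa using continuous_const
  | add p q hp hq => simp only [map_add]; exact hp.add hq
  | mul_X p i hp => simp only [map_mul, MvPolynomial.eval_X]; exact hp.mul (continuous_apply i)

theorem eval_zero_on_closure [TopologicalSpace K] [IsTopologicalRing K] [T1Space K]
    {S : Set (Fin n → K)} (f : MvPolynomial (Fin n) K)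
    (hf : ∀ a ∈ S, MvPolynomial.eval a f = 0) :
    ∀ a ∈ closure S, MvPolynomial.eval a f = 0 := by
  have hcl : IsClosed {a : Fin n → K | MvPolynomial.eval a f = 0} :=
    (isClosed_singleton (x := (0:K))).preimage (continuous_eval f)
  exact fun a ha => closure_minimal (fun b hb => hf b hb) hcl ha

/-- `j`-coordinates are polynomially independent over `S`. -/
def Indep (S : Set (Fin n → K)) {k : ℕ} (j : Fin k → Fin n) : Prop :=
  ∀ q : MvPolynomial (Fin k) K,
    (∀ a ∈ S, MvPolynomial.eval (fun l => a (j l)) q = 0) → q = 0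

theorem Indep.mono {S T : Set (Fin n → K)} {k : ℕ} {j : Fin k → Fin n}
    (hST : S ⊆ T) (h : Indep S j) : Indep T j :=
  fun q hq => h q fun a ha => hq a (hST ha)

theorem not_indep_iff {S : Set (Fin n → K)} {k : ℕ} {j : Fin k → Fin n} :
    ¬ Indep S j ↔ ∃ q : MvPolynomial (Fin k) K, q ≠ 0 ∧
      ∀ a ∈ S, MvPolynomial.eval (fun l => a (j l)) q = 0 := by
  unfold Indep
  push_neg
  tauto

theorem indep_union {S T : Set (Fin n → K)} {k : ℕ} {j : Fin k → Fin n}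
    (h : Indep (S ∪ T) j) : Indep S j ∨ Indep T j := by
  by_contra hc
  push_neg at hc
  obtain ⟨qS, hqS0, hqS⟩ := not_indep_iff.1 hc.1
  obtain ⟨qT, hqT0, hqT⟩ := not_indep_iff.1 hc.2
  have : qS * qT = 0 := by
    apply h
    rintro a (ha | ha) <;> rw [map_mul]
    · rw [hqS a ha, zero_mul]
    · rw [hqT a ha, mul_zero]
  exact hqS0 (by rcases mul_eq_zero.1 this with h' | h'; exact h'; exact absurd h' hqT0)

theorem indep_of_list {cs : List (Set (Fin n → K))} {k : ℕ} {j : Fin k → Fin n}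
    (h : Indep {a | ∃ S ∈ cs, a ∈ S} j) : ∃ S ∈ cs, Indep S j := by
  induction cs with
  | nil =>
    exfalso
    have h0 : {a : Fin n → K | ∃ S ∈ ([] : List (Set (Fin n → K))), a ∈ S} = ∅ := by
      ext a; simp
    rw [h0] at h
    have := h 1 (by intro a ha; exact absurd ha (Set.notMem_empty a))
    simpa using this
  | cons c cs ih =>
    have hsplit : {a : Fin n → K | ∃ S ∈ c :: cs, a ∈ S} = c ∪ {a | ∃ S ∈ cs, a ∈ S} := by
      ext a
      simp only [List.mem_cons, Set.mem_setOf_eq, Set.mem_union]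
      constructor
      · rintro ⟨S, (rfl | hS), haS⟩
        · exact Or.inl haS
        · exact Or.inr ⟨S, hS, haS⟩
      · rintro (h' | ⟨S, hS, haS⟩)
        · exact ⟨c, Or.inl rfl, h'⟩
        · exact ⟨S, Or.inr hS, haS⟩
    rw [hsplit] at h
    rcases indep_union h with h' | h'
    · exact ⟨c, List.mem_cons_self, h'⟩
    · obtain ⟨S, hS, hind⟩ := ih h'
      exact ⟨S, List.mem_cons_of_mem c hS, hind⟩

theorem cons_injective {k : ℕ} {i : Fin n} {j : Fin k → Fin n} (hi : i ∉ Set.range j)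
    (hj : Function.Injective j) :
    Function.Injective (Fin.cons i j : Fin (k+1) → Fin n) := by
  intro x y hxy
  rcases Fin.eq_zero_or_eq_succ x with rfl | ⟨lx, rfl⟩ <;>
    rcases Fin.eq_zero_or_eq_succ y with rfl | ⟨ly, rfl⟩
  · rfl
  · rw [Fin.cons_zero, Fin.cons_succ] at hxy
    exact absurd ⟨ly, hxy.symm⟩ hi
  · rw [Fin.cons_succ, Fin.cons_zero] at hxy
    exact absurd ⟨lx, hxy⟩ hi
  · rw [Fin.cons_succ, Fin.cons_succ] at hxy
    rw [hj hxy]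

theorem indep_sort {S : Set (Fin n → K)} {k : ℕ} {j : Fin k → Fin n}
    (hj : Function.Injective j) (h : Indep S j) :
    ∃ j' : Fin k → Fin n, StrictMono j' ∧ Indep S j' := by
  classical
  set J : Finset (Fin n) := Finset.univ.image j with hJ
  have hcard : J.card = k := by
    rw [hJ, Finset.card_image_of_injective _ hj, Finset.card_univ, Fintype.card_fin]
  have hmem : ∀ l, j l ∈ J := fun l => Finset.mem_image_of_mem j (Finset.mem_univ l)
  set f : Fin k → Fin k := fun l => (J.orderIsoOfFin hcard).symm ⟨j l, hmem l⟩ with hf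
  have hfinj : Function.Injective f := by
    intro x y hxy
    have h2 := congrArg (J.orderIsoOfFin hcard) hxy
    simp only [hf, OrderIso.apply_symm_apply] at h2
    exact hj (congrArg Subtype.val h2)
  have hfbij := Finite.injective_iff_bijective.1 hfinj
  set e := Equiv.ofBijective f hfbij with he
  have hje : ∀ l, (J.orderEmbOfFin hcard) (e l) = j l := by
    intro l
    show (J.orderEmbOfFin hcard) (f l) = j l
    rw [← Finset.coe_orderIsoOfFin_apply]
    simp [hf]
  refine ⟨fun l => J.orderEmbOfFin hcard l, (J.orderEmbOfFin hcard).strictMono, ?_⟩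
  intro q hq
  have hv : ∀ a ∈ S, MvPolynomial.eval (fun l => a (j l)) (MvPolynomial.rename e.symm q) = 0 := by
    intro a ha
    rw [MvPolynomial.eval_rename]
    have : ((fun l => a (j l)) ∘ e.symm) = fun l => a ((J.orderEmbOfFin hcard) l) := by
      funext l
      simp only [Function.comp_apply]
      rw [← hje (e.symm l), Equiv.apply_symm_apply]
    rw [this]
    exact hq a ha
  have := h _ hv
  exact (MvPolynomial.rename_injective _ e.symm.injective)
    (by rw [this, map_zero])

theorem indep_extend [TopologicalSpace K] [IsTopologicalRing K] [T1Space K]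
    {S C : Set (Fin n → K)} {p : MvPolynomial (Fin n) K}
    (hp : ∀ a ∈ S, MvPolynomial.eval a p ≠ 0)
    {k : ℕ} {j : Fin k → Fin n} (hjinj : Function.Injective j)
    (hC1 : C ⊆ closure S) (hC2 : ∀ a ∈ C, MvPolynomial.eval a p = 0)
    (hind : Indep C j) :
    ∃ i : Fin n, i ∉ Set.range j ∧ Indep S (Fin.cons i j : Fin (k+1) → Fin n) := by
  classical
  by_contra hcon
  push_neg at hcon
  set J : Ideal (MvPolynomial (Fin n) K) := {
    carrier := {f | ∀ a ∈ S, MvPolynomial.eval a f = 0}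
    add_mem' := fun hf hg a ha => by
      rw [map_add, hf a ha, hg a ha, add_zero]
    zero_mem' := fun a ha => map_zero _
    smul_mem' := fun c f hf a ha => by
      rw [smul_eq_mul, map_mul, hf a ha, mul_zero] } with hJdef
  have hJmem : ∀ f : MvPolynomial (Fin n) K,
      f ∈ J ↔ ∀ a ∈ S, MvPolynomial.eval a f = 0 := fun f => Iff.rfl
  set ren : MvPolynomial (Fin k) K →+* MvPolynomial (Fin n) K :=
    (MvPolynomial.rename j).toRingHom with hrendef
  have hreneval : ∀ (q : MvPolynomial (Fin k) K) (a : Fin n → K),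
      MvPolynomial.eval a (ren q) = MvPolynomial.eval (fun l => a (j l)) q := by
    intro q a
    show MvPolynomial.eval a (MvPolynomial.rename j q) = _
    rw [MvPolynomial.eval_rename]
    rfl
  set Sj : Submonoid (MvPolynomial (Fin n) K) :=
    Submonoid.map ren.toMonoidHom (nonZeroDivisors (MvPolynomial (Fin k) K)) with hSjdef
  have hSjmem : ∀ x : MvPolynomial (Fin n) K,
      x ∈ Sj ↔ ∃ q : MvPolynomial (Fin k) K, q ≠ 0 ∧ ren q = x := by
    intro x
    simp only [hSjdef, Submonoid.mem_map, RingHom.toMonoidHom_eq_coe, MonoidHom.coe_coe]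
    constructor
    · rintro ⟨q, hq, rfl⟩
      exact ⟨q, mem_nonZeroDivisors_iff_ne_zero.1 hq, rfl⟩
    · rintro ⟨q, hq, rfl⟩
      exact ⟨q, mem_nonZeroDivisors_iff_ne_zero.2 hq, rfl⟩
  have hdisj1 : Disjoint ((J ⊔ Ideal.span {p} : Ideal (MvPolynomial (Fin n) K)) :
      Set (MvPolynomial (Fin n) K)) (Sj : Set (MvPolynomial (Fin n) K)) := by
    rw [Set.disjoint_left]
    rintro x hx hxS
    obtain ⟨q, hq0, rfl⟩ := (hSjmem x).1 hxS
    obtain ⟨g, hg, r, hr, hgr⟩ := Submodule.mem_sup.1 hx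
    obtain ⟨h, rfl⟩ := Ideal.mem_span_singleton'.1 hr
    apply hq0
    apply hind
    intro a ha
    rw [← hreneval, ← hgr, map_add, map_mul,
      eval_zero_on_closure g ((hJmem g).1 hg) a (hC1 ha), hC2 a ha, mul_zero, add_zero]
  obtain ⟨P, hPprime, hJpP, hPdisj⟩ :=
    Ideal.exists_le_prime_disjoint (J ⊔ Ideal.span {p}) Sj hdisj1
  haveI := hPprime
  set T : Submonoid (MvPolynomial (Fin n) K) := P.primeCompl ⊔ Submonoid.powers p with hTdef
  have hdisj2 : Disjoint (J : Set (MvPolynomial (Fin n) K))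
      (T : Set (MvPolynomial (Fin n) K)) := by
    rw [Set.disjoint_left]
    rintro x hxJ hxT
    obtain ⟨s, hs, t, ht, rfl⟩ := Submonoid.mem_sup.1 hxT
    obtain ⟨m, rfl⟩ := ht
    have hsJ : s ∈ J := by
      rw [hJmem]
      intro a ha
      have := (hJmem _).1 hxJ a ha
      rw [map_mul, map_pow] at this
      rcases mul_eq_zero.1 this with h' | h'
      · exact h'
      · exact absurd (pow_eq_zero_iff'.mp h').1 (hp a ha)
    exact hs (hJpP ((le_sup_left : J ≤ J ⊔ Ideal.span {p}) hsJ))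
  obtain ⟨Q, hQprime, hJQ, hQdisj⟩ := Ideal.exists_le_prime_disjoint J T hdisj2
  haveI := hQprime
  have hQP : Q ≤ P := by
    intro x hx
    by_contra hxP
    exact Set.disjoint_left.1 hQdisj hx ((le_sup_left : P.primeCompl ≤ T) hxP)
  have hpT : p ∈ T := (le_sup_right : Submonoid.powers p ≤ T) (Submonoid.mem_powers p)
  have hpQ : p ∉ Q := fun h => Set.disjoint_left.1 hQdisj h hpT
  have hrenQ : ∀ q : MvPolynomial (Fin k) K, ren q ∈ Q → q = 0 := by
    intro q hq
    by_contra hq0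
    exact Set.disjoint_left.1 hPdisj (hQP hq) ((hSjmem _).2 ⟨q, hq0, rfl⟩)
  set mkQ : MvPolynomial (Fin n) K →+* MvPolynomial (Fin n) K ⧸ Q := Ideal.Quotient.mk Q
    with hmkQdef
  set toA : MvPolynomial (Fin k) K →+* MvPolynomial (Fin n) K ⧸ Q := mkQ.comp ren with htoAdef
  set xbar : Fin n → MvPolynomial (Fin n) K ⧸ Q := fun i => mkQ (MvPolynomial.X i)
    with hxbardef
  have hdep : ∀ i : Fin n, ∃ q : MvPolynomial (Fin (k+1)) K, q ≠ 0 ∧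
      MvPolynomial.rename (Fin.cons i j : Fin (k+1) → Fin n) q ∈ Q := by
    intro i
    by_cases hi : i ∈ Set.range j
    · obtain ⟨l₀, hl₀⟩ := hi
      refine ⟨MvPolynomial.X 0 - MvPolynomial.X l₀.succ, ?_, ?_⟩
      · rw [sub_ne_zero]
        intro hX
        have := MvPolynomial.X_injective hX
        exact absurd this.symm (Fin.succ_ne_zero l₀)
      · rw [map_sub, MvPolynomial.rename_X, MvPolynomial.rename_X, Fin.cons_zero,
          Fin.cons_succ, hl₀, sub_self]
        exact Q.zero_mem
    · obtain ⟨q, hq0, hq⟩ := not_indep_iff.1 (hcon i hi)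
      refine ⟨q, hq0, ?_⟩
      apply hJQ
      rw [hJmem]
      intro a ha
      rw [MvPolynomial.eval_rename]
      exact hq a ha
  set S2 : Submonoid (MvPolynomial (Fin n) K ⧸ Q) := Submonoid.map mkQ.toMonoidHom Sj
    with hS2def
  have hS2mem : ∀ x, x ∈ S2 ↔ ∃ q : MvPolynomial (Fin k) K, q ≠ 0 ∧ toA q = x := by
    intro x
    simp only [hS2def, Submonoid.mem_map, RingHom.toMonoidHom_eq_coe, MonoidHom.coe_coe]
    constructor
    · rintro ⟨y, hy, rfl⟩
      obtain ⟨q, hq0, rfl⟩ := (hSjmem y).1 hy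
      exact ⟨q, hq0, rfl⟩
    · rintro ⟨q, hq0, rfl⟩
      exact ⟨ren q, (hSjmem _).2 ⟨q, hq0, rfl⟩, rfl⟩
  have htoA0 : ∀ q : MvPolynomial (Fin k) K, toA q = 0 → q = 0 := by
    intro q hq
    apply hrenQ
    rwa [htoAdef, RingHom.comp_apply, hmkQdef, Ideal.Quotient.eq_zero_iff_mem] at hq
  have hS2nzd : S2 ≤ nonZeroDivisors (MvPolynomial (Fin n) K ⧸ Q) := by
    intro x hx
    obtain ⟨q, hq0, rfl⟩ := (hS2mem x).1 hx
    rw [mem_nonZeroDivisors_iff_ne_zero]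
    intro h0
    exact hq0 (htoA0 q h0)
  haveI : IsDomain (Localization S2) :=
    IsLocalization.isDomain_localization hS2nzd
  have hABinj : Function.Injective (algebraMap (MvPolynomial (Fin n) K ⧸ Q) (Localization S2)) :=
    IsLocalization.injective (Localization S2) hS2nzd
  set F := FractionRing (MvPolynomial (Fin k) K) with hFdef
  set g : MvPolynomial (Fin k) K →+* Localization S2 :=
    (algebraMap (MvPolynomial (Fin n) K ⧸ Q) (Localization S2)).comp toA with hgdef
  have hgu : ∀ y : nonZeroDivisors (MvPolynomial (Fin k) K), IsUnit (g y) := by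
    rintro ⟨y, hy⟩
    have hy0 := mem_nonZeroDivisors_iff_ne_zero.1 hy
    have hmem : toA y ∈ S2 := (hS2mem _).2 ⟨y, hy0, rfl⟩
    exact IsLocalization.map_units (Localization S2) (⟨toA y, hmem⟩ : S2)
  set gF : F →+* Localization S2 :=
    IsLocalization.lift (M := nonZeroDivisors (MvPolynomial (Fin k) K)) (S := F)
      (P := Localization S2) (g := g) hgu with hgFdef
  letI : Algebra F (Localization S2) := RingHom.toAlgebra (R := F) (S := Localization S2) gF
  have halgFB : algebraMap F (Localization S2) = gF := rfl
  have hgF : ∀ q : MvPolynomial (Fin k) K,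
      algebraMap F (Localization S2) (algebraMap (MvPolynomial (Fin k) K) F q) = g q := by
    intro q
    rw [halgFB, hgFdef]
    exact IsLocalization.lift_eq hgu q
  have hFinj : Function.Injective (algebraMap (MvPolynomial (Fin k) K) F) :=
    IsFractionRing.injective _ _
  -- generators are integral over F
  have hgen : ∀ i : Fin n,
      IsIntegral F (algebraMap (MvPolynomial (Fin n) K ⧸ Q) (Localization S2) (xbar i)) := by
    intro i
    obtain ⟨q, hq0, hqQ⟩ := hdep i
    have hkey : Polynomial.eval (xbar i)
        (Polynomial.map toA (MvPolynomial.finSuccEquiv K k q)) = 0 := by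
      have hΦΨ : (Polynomial.evalRingHom (xbar i)).comp ((Polynomial.mapRingHom toA).comp
            ((MvPolynomial.finSuccEquiv K k).toAlgHom.toRingHom)) =
          mkQ.comp (MvPolynomial.rename (Fin.cons i j : Fin (k+1) → Fin n)).toRingHom := by
        apply MvPolynomial.ringHom_ext
        · intro c
          simp [MvPolynomial.finSuccEquiv_apply, htoAdef, hrendef, MvPolynomial.rename_C]
        · intro i'
          refine Fin.cases ?_ ?_ i'
          · simp [MvPolynomial.finSuccEquiv_X_zero, MvPolynomial.rename_X, Fin.cons_zero,
              hxbardef]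
          · intro l
            simp [MvPolynomial.finSuccEquiv_X_succ, MvPolynomial.rename_X, Fin.cons_succ,
              htoAdef, hrendef]
      calc Polynomial.eval (xbar i) (Polynomial.map toA (MvPolynomial.finSuccEquiv K k q))
          = (Polynomial.evalRingHom (xbar i)).comp ((Polynomial.mapRingHom toA).comp
              ((MvPolynomial.finSuccEquiv K k).toAlgHom.toRingHom)) q := rfl
        _ = mkQ.comp (MvPolynomial.rename (Fin.cons i j : Fin (k+1) → Fin n)).toRingHom q := by
              rw [hΦΨ]
        _ = 0 := Ideal.Quotient.eq_zero_iff_mem.2 hqQ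
    refine IsAlgebraic.isIntegral
      ⟨(MvPolynomial.finSuccEquiv K k q).map (algebraMap (MvPolynomial (Fin k) K) F), ?_, ?_⟩
    · intro h0
      apply hq0
      have hqt0 : MvPolynomial.finSuccEquiv K k q = 0 := (Polynomial.map_eq_zero_iff hFinj).1 h0
      have h00 : MvPolynomial.finSuccEquiv K k q = MvPolynomial.finSuccEquiv K k 0 := by
        rw [hqt0, map_zero]
      exact (MvPolynomial.finSuccEquiv K k).injective h00
    · rw [Polynomial.aeval_def, Polynomial.eval₂_map]
      have hcomp : (algebraMap F (Localization S2)).comp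
          (algebraMap (MvPolynomial (Fin k) K) F) = g := RingHom.ext hgF
      rw [hcomp, hgdef]
      rw [← Polynomial.hom_eval₂]
      rw [← Polynomial.eval_map, hkey, map_zero]
  -- B is generated over F by the xbar's
  set Bsub := Algebra.adjoin F (Set.range fun i : Fin n =>
    algebraMap (MvPolynomial (Fin n) K ⧸ Q) (Localization S2) (xbar i)) with hBsubdef
  have hCmem : ∀ c : K,
      algebraMap (MvPolynomial (Fin n) K ⧸ Q) (Localization S2) (mkQ (MvPolynomial.C c)) ∈ Bsub := by
    intro c
    have h1 : mkQ (MvPolynomial.C c) = toA (MvPolynomial.C c) := by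
      rw [htoAdef, RingHom.comp_apply]
      congr 1
      exact (MvPolynomial.rename_C j c).symm
    rw [h1]
    have h2 : algebraMap (MvPolynomial (Fin n) K ⧸ Q) (Localization S2) (toA (MvPolynomial.C c))
        = g (MvPolynomial.C c) := rfl
    rw [h2, ← hgF]
    exact Bsub.algebraMap_mem _
  have hmem : ∀ f : MvPolynomial (Fin n) K,
      algebraMap (MvPolynomial (Fin n) K ⧸ Q) (Localization S2) (mkQ f) ∈ Bsub := by
    intro f
    induction f using MvPolynomial.induction_on with
    | C c => exact hCmem c
    | add f1 f2 hf1 hf2 =>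
      rw [map_add mkQ f1 f2,
        map_add (algebraMap (MvPolynomial (Fin n) K ⧸ Q) (Localization S2)) (mkQ f1) (mkQ f2)]
      exact Bsub.add_mem hf1 hf2
    | mul_X f1 i hf1 =>
      rw [map_mul mkQ f1 (MvPolynomial.X i),
        map_mul (algebraMap (MvPolynomial (Fin n) K ⧸ Q) (Localization S2)) (mkQ f1)
          (mkQ (MvPolynomial.X i))]
      exact Bsub.mul_mem hf1 (Algebra.subset_adjoin ⟨i, rfl⟩)
  have hall : ∀ b : Localization S2, b ∈ Bsub := by
    intro b
    obtain ⟨⟨a0, s⟩, rfl⟩ := IsLocalization.mk'_surjective S2 b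
    obtain ⟨q, hq0, hqs⟩ := (hS2mem (s : MvPolynomial (Fin n) K ⧸ Q)).1 s.2
    obtain ⟨f, rfl⟩ := Ideal.Quotient.mk_surjective (I := Q) a0
    have hfq : algebraMap (MvPolynomial (Fin k) K) F q ≠ 0 := fun h =>
      hq0 (hFinj (by rw [h, map_zero]))
    have hinv1 : IsLocalization.mk' (Localization S2) (mkQ f) s =
        algebraMap (MvPolynomial (Fin n) K ⧸ Q) (Localization S2) (mkQ f) *
          IsLocalization.mk' (Localization S2) 1 s :=
      IsLocalization.mk'_eq_mul_mk'_one _ _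
    have hsmap : algebraMap (MvPolynomial (Fin n) K ⧸ Q) (Localization S2)
        (s : MvPolynomial (Fin n) K ⧸ Q) =
        algebraMap F (Localization S2) (algebraMap (MvPolynomial (Fin k) K) F q) := by
      rw [hgF]
      show _ = algebraMap (MvPolynomial (Fin n) K ⧸ Q) (Localization S2) (toA q)
      rw [hqs]
    have i1 : algebraMap F (Localization S2) (algebraMap (MvPolynomial (Fin k) K) F q) *
        IsLocalization.mk' (Localization S2) (1 : MvPolynomial (Fin n) K ⧸ Q) s = 1 := by
      rw [← hsmap]
      exact (IsLocalization.mk'_spec' (Localization S2) (1 : MvPolynomial (Fin n) K ⧸ Q) s).trans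
        (map_one _)
    have i2 : algebraMap F (Localization S2) (algebraMap (MvPolynomial (Fin k) K) F q) *
        algebraMap F (Localization S2) (algebraMap (MvPolynomial (Fin k) K) F q)⁻¹ = 1 := by
      rw [← map_mul, mul_inv_cancel₀ hfq, map_one]
    have hmk1 : IsLocalization.mk' (Localization S2) (1 : MvPolynomial (Fin n) K ⧸ Q) s =
        algebraMap F (Localization S2) (algebraMap (MvPolynomial (Fin k) K) F q)⁻¹ := by
      calc IsLocalization.mk' (Localization S2) (1 : MvPolynomial (Fin n) K ⧸ Q) s
          = IsLocalization.mk' (Localization S2) (1 : MvPolynomial (Fin n) K ⧸ Q) s *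
            (algebraMap F (Localization S2) (algebraMap (MvPolynomial (Fin k) K) F q) *
              algebraMap F (Localization S2) (algebraMap (MvPolynomial (Fin k) K) F q)⁻¹) := by
            rw [i2, mul_one]
        _ = (algebraMap F (Localization S2) (algebraMap (MvPolynomial (Fin k) K) F q) *
              IsLocalization.mk' (Localization S2) (1 : MvPolynomial (Fin n) K ⧸ Q) s) *
            algebraMap F (Localization S2) (algebraMap (MvPolynomial (Fin k) K) F q)⁻¹ := by
            ring
        _ = algebraMap F (Localization S2) (algebraMap (MvPolynomial (Fin k) K) F q)⁻¹ := by
            rw [i1, one_mul]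
    show IsLocalization.mk' (Localization S2) (mkQ f) s ∈ Bsub
    rw [hinv1, hmk1]
    exact Bsub.mul_mem (hmem f) (Bsub.algebraMap_mem _)
  haveI hBint : Algebra.IsIntegral F (Localization S2) := by
    constructor
    intro b
    have hint : Algebra.IsIntegral F Bsub := Algebra.IsIntegral.adjoin (S := Set.range fun i : Fin n =>
      algebraMap (MvPolynomial (Fin n) K ⧸ Q) (Localization S2) (xbar i)) (by
      rintro x ⟨i, rfl⟩
      exact hgen i)
    have h1 := hint.isIntegral (⟨b, hall b⟩ : Bsub)
    have h2 := h1.map (Bsub.val)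
    simpa using h2
  have hFBinj : Function.Injective (algebraMap F (Localization S2)) := by
    rw [halgFB]
    exact gF.injective
  have hBfield : IsField (Localization S2) :=
    (Algebra.IsIntegral.isField_iff_isField (R := F) (S := Localization S2) hFBinj).1 (Field.toIsField F)
  -- invert p and derive the contradiction
  have hpA : mkQ p ≠ 0 := by
    rw [hmkQdef, Ne, Ideal.Quotient.eq_zero_iff_mem]
    exact hpQ
  have hpB : algebraMap (MvPolynomial (Fin n) K ⧸ Q) (Localization S2) (mkQ p) ≠ 0 := fun h =>
    hpA (hABinj (by rw [h, map_zero]))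
  obtain ⟨binv, hbinv⟩ := hBfield.mul_inv_cancel hpB
  obtain ⟨⟨a0, s⟩, rfl⟩ := IsLocalization.mk'_surjective S2 binv
  have h1 : algebraMap (MvPolynomial (Fin n) K ⧸ Q) (Localization S2) (mkQ p * a0) =
      algebraMap (MvPolynomial (Fin n) K ⧸ Q) (Localization S2)
        (s : MvPolynomial (Fin n) K ⧸ Q) := by
    have h2 := congrArg (fun x => x * algebraMap (MvPolynomial (Fin n) K ⧸ Q) (Localization S2)
      (s : MvPolynomial (Fin n) K ⧸ Q)) hbinv
    simp only [one_mul] at h2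
    rw [mul_assoc, IsLocalization.mk'_spec] at h2
    rw [map_mul]
    exact h2
  have h3 : mkQ p * a0 = (s : MvPolynomial (Fin n) K ⧸ Q) := hABinj h1
  obtain ⟨q, hq0, hqs⟩ := (hS2mem (s : MvPolynomial (Fin n) K ⧸ Q)).1 s.2
  obtain ⟨f, rfl⟩ := Ideal.Quotient.mk_surjective (I := Q) a0
  have h4 : ren q - p * f ∈ Q := by
    apply Ideal.Quotient.eq.1
    show mkQ (ren q) = mkQ (p * f)
    have htoAq : mkQ (ren q) = toA q := rfl
    rw [htoAq, hqs, ← h3, map_mul]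
  have hpP : p ∈ P :=
    hJpP ((le_sup_right : Ideal.span {p} ≤ J ⊔ Ideal.span {p})
      (Ideal.mem_span_singleton_self p))
  have h5 : ren q ∈ P := by
    have heq : ren q = (ren q - p * f) + p * f := by ring
    rw [heq]
    exact P.add_mem (hQP h4) (P.mul_mem_right f hpP)
  exact Set.disjoint_left.1 hPdisj h5 ((hSjmem _).2 ⟨q, hq0, rfl⟩)

end IndepSection

/-! ### Topological properties of cells -/

section CellTopology

variable {n : ℕ} [TopologicalSpace K] [IsTopologicalRing K]

theorem continuous_realize (t : (Language.ring.sum Lrel).Term (Fin n ⊕ K)) :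
    Continuous fun a : Fin n → K => t.realize (Sum.elim a id) := by
  have h : (fun a : Fin n → K => t.realize (Sum.elim a id)) =
      fun a => MvPolynomial.eval a (tpoly t) := funext fun a => tpoly_realize t a
  rw [h]
  exact continuous_eval _

theorem isClosed_zeroSet [T1Space K] (t : (Language.ring.sum Lrel).Term (Fin n ⊕ K)) :
    IsClosed {a : Fin n → K | t.realize (Sum.elim a id) = 0} :=
  (isClosed_singleton (x := (0:K))).preimage (continuous_realize t)

variable (hrelK : ∀ (m k : ℕ) (R : Lrel.Relations m) (j : Fin k → Fin m), StrictMono j →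
      IsOpen {b : Fin k → K | (∀ l, b l ≠ 0) ∧
        Structure.RelMap R (Function.extend j b 0)} ∧
      IsOpen {b : Fin k → K | (∀ l, b l ≠ 0) ∧
        ¬ Structure.RelMap R (Function.extend j b 0)})

include hrelK

theorem relCond_open (r : RelCond Lrel K n) : IsOpen (RelCond.set r) := by
  have hvals : Continuous fun a : Fin n → K => r.vals a :=
    continuous_pi fun l => continuous_realize (r.t l)
  cases hp : r.pos
  · have hs : RelCond.set r = (fun a => r.vals a) ⁻¹' {b : Fin r.k → K | (∀ l, b l ≠ 0) ∧
        ¬ Structure.RelMap r.R (Function.extend r.j b 0)} := by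
      ext a
      simp only [RelCond.set, Set.mem_preimage, Set.mem_setOf_eq, hp]
      constructor
      · rintro ⟨h1, h2⟩
        exact ⟨h1, fun hR => by simp [hR] at h2⟩
      · rintro ⟨h1, h2⟩
        exact ⟨h1, by simp [h2]⟩
    rw [hs]
    exact ((hrelK r.m r.k r.R r.j r.hj).2).preimage hvals
  · have hs : RelCond.set r = (fun a => r.vals a) ⁻¹' {b : Fin r.k → K | (∀ l, b l ≠ 0) ∧
        Structure.RelMap r.R (Function.extend r.j b 0)} := by
      ext a
      simp only [RelCond.set, Set.mem_preimage, Set.mem_setOf_eq, hp]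
      constructor
      · rintro ⟨h1, h2⟩
        exact ⟨h1, by simp at h2; exact h2⟩
      · rintro ⟨h1, h2⟩
        exact ⟨h1, by simp [h2]⟩
    rw [hs]
    exact ((hrelK r.m r.k r.R r.j r.hj).1).preimage hvals

def Cell.openPart (c : Cell Lrel K n) : Set (Fin n → K) :=
  {a | (∀ t ∈ c.nzs, t.realize (Sum.elim a id) ≠ (0:K)) ∧ ∀ r ∈ c.rels, a ∈ RelCond.set r}

def Cell.actives (c : Cell Lrel K n) : List ((Language.ring.sum Lrel).Term (Fin n ⊕ K)) :=
  c.nzs ++ c.rels.flatMap fun r => List.ofFn r.t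

theorem cell_openPart_open [T1Space K] (c : Cell Lrel K n) : IsOpen c.openPart := by
  have h : c.openPart = (⋂ t ∈ {x | x ∈ c.nzs}, {a : Fin n → K | t.realize (Sum.elim a id) ≠ 0})
      ∩ ⋂ r ∈ {x | x ∈ c.rels}, RelCond.set r := by
    ext a
    simp only [Cell.openPart, Set.mem_inter_iff, Set.mem_iInter, Set.mem_setOf_eq]
  rw [h]
  apply IsOpen.inter
  · refine (c.nzs.finite_toSet).isOpen_biInter fun t _ => ?_
    have : {a : Fin n → K | t.realize (Sum.elim a id) ≠ 0} =
        {a : Fin n → K | t.realize (Sum.elim a id) = 0}ᶜ := rfl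
    rw [this]
    exact (isClosed_zeroSet t).isOpen_compl
  · exact (c.rels.finite_toSet).isOpen_biInter fun r _ => relCond_open hrelK r

omit hrelK in
theorem actives_nonzero (c : Cell Lrel K n) :
    ∀ t ∈ c.actives, ∀ a ∈ c.set, t.realize (Sum.elim a id) ≠ 0 := by
  intro t ht a ha
  rcases List.mem_append.1 ht with ht' | ht'
  · exact ha.2.1 t ht'
  · rw [List.mem_flatMap] at ht'
    obtain ⟨r, hr, htr⟩ := ht'
    rw [List.mem_ofFn] at htr
    obtain ⟨l, rfl⟩ := htr
    exact (ha.2.2 r hr).1 l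

theorem cell_frontier [T1Space K] (c : Cell Lrel K n) :
    ∀ x ∈ closure c.set \ c.set, ∃ t ∈ c.actives, t.realize (Sum.elim x id) = 0 := by
  rintro x ⟨hxc, hxn⟩
  have hz : ∀ t ∈ c.zs, t.realize (Sum.elim x id) = 0 := by
    intro t ht
    exact closure_minimal (fun a (ha : a ∈ c.set) => ha.1 t ht) (isClosed_zeroSet t) hxc
  by_cases hnz : ∀ t ∈ c.nzs, t.realize (Sum.elim x id) ≠ 0
  · have hrel' : ¬ ∀ r ∈ c.rels, x ∈ RelCond.set r := fun h => hxn ⟨hz, hnz, h⟩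
    push_neg at hrel'
    obtain ⟨r, hr, hxr⟩ := hrel'
    rcases r.not_mem x hxr with ⟨l, hl⟩ | hflip
    · refine ⟨r.t l, ?_, hl⟩
      refine List.mem_append_right _ ?_
      rw [List.mem_flatMap]
      exact ⟨r, hr, by rw [List.mem_ofFn]; exact ⟨l, rfl⟩⟩
    · exfalso
      have hopen : IsOpen (RelCond.set r.flip) := relCond_open hrelK r.flip
      obtain ⟨y, hyo, hyS⟩ := mem_closure_iff.1 hxc _ hopen hflip
      have hyr : y ∈ RelCond.set r := hyS.2.2 r hr
      have hd := r.set_disjoint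
      rw [Set.eq_empty_iff_forall_notMem] at hd
      exact hd y ⟨hyr, hyo⟩
  · push_neg at hnz
    obtain ⟨t, ht, ht0⟩ := hnz
    exact ⟨t, List.mem_append_left _ ht, ht0⟩

theorem cells_empty_interior [T1Space K] {m : ℕ} (cs : List (Cell Lrel K m))
    (hint : interior (cellsSet cs) = ∅) :
    ∃ Qp : MvPolynomial (Fin m) K, Qp ≠ 0 ∧
      ∀ a ∈ cellsSet cs, MvPolynomial.eval a Qp = 0 := by
  induction cs with
  | nil =>
    refine ⟨1, one_ne_zero, ?_⟩
    intro a ha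
    simp only [cellsSet, List.not_mem_nil, false_and, exists_false, Set.mem_setOf_eq] at ha
  | cons c cs ih =>
    have hint' : interior (cellsSet cs) = ∅ := by
      apply Set.subset_empty_iff.1
      rw [← hint]
      apply interior_mono
      rw [cellsSet_cons]
      exact Set.subset_union_right
    obtain ⟨Qr, hQr0, hQr⟩ := ih hint'
    by_cases hc : ∃ t ∈ c.zs, tpoly t ≠ 0
    · obtain ⟨t, ht, ht0⟩ := hc
      refine ⟨tpoly t * Qr, mul_ne_zero ht0 hQr0, ?_⟩
      intro a ha
      rw [cellsSet_cons] at ha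
      rcases ha with ha | ha
      · rw [map_mul, ← tpoly_realize, ha.1 t ht, zero_mul]
      · rw [map_mul, hQr a ha, mul_zero]
    · push_neg at hc
      have hzuniv : ∀ (a : Fin m → K), ∀ t ∈ c.zs, t.realize (Sum.elim a id) = (0:K) := by
        intro a t ht
        rw [tpoly_realize, hc t ht, map_zero]
      have hcopen : c.set = c.openPart := by
        ext a
        simp only [Cell.set, Cell.openPart, Set.mem_setOf_eq]
        exact ⟨fun h => ⟨h.2.1, h.2.2⟩, fun h => ⟨hzuniv a, h.1, h.2⟩⟩
      have hcempty : c.set = ∅ := by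
        apply Set.subset_empty_iff.1
        rw [← hint]
        have hsub : c.set ⊆ cellsSet (c :: cs) := by
          rw [cellsSet_cons]
          exact Set.subset_union_left
        have hopen : IsOpen c.set := by
          rw [hcopen]
          exact cell_openPart_open hrelK c
        exact interior_maximal hsub hopen
      refine ⟨Qr, hQr0, ?_⟩
      intro a ha
      rw [cellsSet_cons] at ha
      rcases ha with ha | ha
      · rw [hcempty] at ha
        exact absurd ha (Set.notMem_empty a)
      · exact hQr a ha

end CellTopology

/-! ### Projections are definable; independence gives interior -/

section Projection

variable {n : ℕ}

noncomputable def projFormula (φ : (Language.ring.sum Lrel).Formula (Fin n ⊕ K)) {k : ℕ}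
    (j : Fin k → Fin n) : (Language.ring.sum Lrel).Formula (Fin k ⊕ K) :=
  BoundedFormula.exs
    ((BoundedFormula.relabel
        (Sum.elim (fun i => Sum.inr i) (fun c => Sum.inl (Sum.inr c))) φ)
      ⊓ ((List.ofFn fun l : Fin k =>
          Term.bdEqual (Term.var (Sum.inl (Sum.inl l)))
            (Term.var (Sum.inr (Fin.castAdd 0 (j l)))))).foldr (· ⊓ ·) ⊤)

theorem projFormula_realize (φ : (Language.ring.sum Lrel).Formula (Fin n ⊕ K)) {k : ℕ}
    (j : Fin k → Fin n) (b : Fin k → K) :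
    (projFormula φ j).Realize (Sum.elim b id) ↔
      b ∈ (fun x : Fin n → K => x ∘ j) '' {a | φ.Realize (Sum.elim a id)} := by
  rw [projFormula, BoundedFormula.realize_exs]
  constructor
  · rintro ⟨xs, hxs⟩
    rw [BoundedFormula.realize_inf] at hxs
    obtain ⟨h1, h2⟩ := hxs
    rw [BoundedFormula.realize_relabel] at h1
    refine ⟨fun i => xs (Fin.castAdd 0 i), ?_, ?_⟩
    · show φ.Realize (Sum.elim (fun i => xs (Fin.castAdd 0 i)) id)
      have hfun : (Sum.elim (Sum.elim b id) (xs ∘ Fin.castAdd 0) ∘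
          (Sum.elim (fun i => Sum.inr i) (fun c => Sum.inl (Sum.inr c)))) =
          Sum.elim (fun i => xs (Fin.castAdd 0 i)) (id : K → K) := by
        funext x
        rcases x with i | c <;> rfl
      rw [hfun] at h1
      have hdef : (xs ∘ Fin.natAdd n) = (default : Fin 0 → K) := Subsingleton.elim _ _
      rw [hdef] at h1
      exact h1
    · show (fun l => xs (Fin.castAdd 0 (j l))) = b
      rw [BoundedFormula.realize_foldr_inf] at h2
      funext l
      have hmem : (Term.bdEqual
          (Term.var (Sum.inl (Sum.inl l)) :
            (Language.ring.sum Lrel).Term ((Fin k ⊕ K) ⊕ Fin (n + 0)))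
          (Term.var (Sum.inr (Fin.castAdd 0 (j l))))) ∈
          (List.ofFn fun l : Fin k =>
            Term.bdEqual (Term.var (Sum.inl (Sum.inl l)))
              (Term.var (Sum.inr (Fin.castAdd 0 (j l))))) := by
        rw [List.mem_ofFn]
        exact ⟨l, rfl⟩
      have := h2 _ hmem
      rw [BoundedFormula.realize_bdEqual] at this
      simp only [Term.realize_var, Sum.elim_inl, Sum.elim_inr] at this
      exact this.symm
  · rintro ⟨a, ha, rfl⟩
    refine ⟨fun i => a (Fin.cast (by omega) i), ?_⟩
    rw [BoundedFormula.realize_inf]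
    constructor
    · rw [BoundedFormula.realize_relabel]
      have hfun : (Sum.elim (Sum.elim ((fun x : Fin n → K => x ∘ j) a) id)
          ((fun i : Fin (n+0) => a (Fin.cast (by omega) i)) ∘ Fin.castAdd 0) ∘
          (Sum.elim (fun i => Sum.inr i) (fun c => Sum.inl (Sum.inr c)))) =
          Sum.elim a (id : K → K) := by
        funext x
        rcases x with i | c
        · simp only [Function.comp_apply, Sum.elim_inl, Sum.elim_inr]
          congr 1
        · rfl
      rw [hfun]
      have hdef : ((fun i : Fin (n+0) => a (Fin.cast (by omega) i)) ∘ Fin.natAdd n) =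
          (default : Fin 0 → K) := Subsingleton.elim _ _
      rw [hdef]
      exact ha
    · rw [BoundedFormula.realize_foldr_inf]
      intro ψ hψ
      rw [List.mem_ofFn] at hψ
      obtain ⟨l, rfl⟩ := hψ
      rw [BoundedFormula.realize_bdEqual]
      simp only [Term.realize_var, Sum.elim_inl, Sum.elim_inr]
      show a (j l) = a (Fin.cast _ (Fin.castAdd 0 (j l)))
      congr 1

theorem closure_cellsSet [TopologicalSpace K] (cs : List (Cell Lrel K n)) :
    closure (cellsSet cs) = {a | ∃ c ∈ cs, a ∈ closure c.set} := by
  induction cs with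
  | nil =>
    have h0 : (cellsSet ([] : List (Cell Lrel K n))) = ∅ := by
      ext a
      simp [cellsSet]
    rw [h0, closure_empty]
    ext a
    simp
  | cons c cs ih =>
    rw [cellsSet_cons, closure_union, ih]
    ext a
    simp only [Set.mem_union, Set.mem_setOf_eq, List.mem_cons]
    constructor
    · rintro (h | ⟨d, hd, hda⟩)
      · exact ⟨c, Or.inl rfl, h⟩
      · exact ⟨d, Or.inr hd, hda⟩
    · rintro ⟨d, (rfl | hd), hda⟩
      · exact Or.inl hda
      · exact Or.inr ⟨d, hd, hda⟩

theorem indep_to_interior [TopologicalSpace K] [IsTopologicalRing K] [T1Space K]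
    (hQE : ∀ (m : ℕ) (φ : (Language.ring.sum Lrel).Formula (Fin m ⊕ K)),
      ∃ ψ : (Language.ring.sum Lrel).Formula (Fin m ⊕ K),
        BoundedFormula.IsQF ψ ∧
        ∀ a : Fin m → K, φ.Realize (Sum.elim a id) ↔ ψ.Realize (Sum.elim a id))
    (hrelK : ∀ (m k : ℕ) (R : Lrel.Relations m) (j : Fin k → Fin m), StrictMono j →
      IsOpen {b : Fin k → K | (∀ l, b l ≠ 0) ∧
        Structure.RelMap R (Function.extend j b 0)} ∧
      IsOpen {b : Fin k → K | (∀ l, b l ≠ 0) ∧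
        ¬ Structure.RelMap R (Function.extend j b 0)})
    {E : Set (Fin n → K)} {φ : (Language.ring.sum Lrel).Formula (Fin n ⊕ K)}
    (hEφ : E = {a | φ.Realize (Sum.elim a id)})
    {k : ℕ} {j : Fin k → Fin n} (hind : Indep E j) :
    (interior ((fun x : Fin n → K => x ∘ j) '' E)).Nonempty := by
  by_contra hcon
  rw [Set.not_nonempty_iff_eq_empty] at hcon
  obtain ⟨ψ, hψQF, hψ⟩ := hQE k (projFormula φ j)
  obtain ⟨cs, hcs⟩ := qf_decomp hψQF
  have hset : (fun x : Fin n → K => x ∘ j) '' E = cellsSet cs := by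
    rw [← hcs]
    ext b
    simp only [Set.mem_setOf_eq]
    rw [show (BoundedFormula.Realize ψ (Sum.elim b id) (default : Fin 0 → K)) =
      ψ.Realize (Sum.elim b id) from rfl]
    rw [← hψ b, projFormula_realize, hEφ]
  rw [hset] at hcon
  obtain ⟨Qp, hQp0, hQp⟩ := cells_empty_interior hrelK cs hcon
  exact hQp0 (hind Qp fun a ha => hQp _ (by rw [← hset]; exact ⟨a, ha, rfl⟩))

end Projection


section Glue

variable {n : ℕ}
variable {Γ₀ : Type*} [LinearOrderedCommGroupWithZero Γ₀] [Valued K Γ₀]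

theorem poly_vanish_open [Infinite K]
    (hnd : ¬ IsOpen ({(0:K)} : Set K)) {m : ℕ} {O : Set (Fin m → K)} (hO : IsOpen O)
    (hne : O.Nonempty) (q : MvPolynomial (Fin m) K)
    (hq : ∀ a ∈ O, MvPolynomial.eval a q = 0) : q = 0 := by
  obtain ⟨B, hB, hBO⟩ := exists_box hO hne
  exact poly_vanish_box B (fun i => open_infinite hnd (hB i).1 (hB i).2) q
    (fun a ha => hq a (hBO ha))

theorem interior_to_indep [Infinite K]
    (hnd : ¬ IsOpen ({(0:K)} : Set K)) {S : Set (Fin n → K)} {k : ℕ} {j : Fin k → Fin n}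
    (h : (interior ((fun x : Fin n → K => x ∘ j) '' S)).Nonempty) : Indep S j := by
  intro q hq
  apply poly_vanish_open hnd isOpen_interior h q
  intro b hb
  obtain ⟨a, ha, rfl⟩ := interior_subset hb
  exact hq a ha

theorem final_glue
    (hval : ∃ x : K, x ≠ 0 ∧ Valued.v x ≠ (1 : Γ₀))
    (hQE : ∀ (m : ℕ) (φ : (FirstOrder.Language.ring.sum Lrel).Formula (Fin m ⊕ K)),
      ∃ ψ : (FirstOrder.Language.ring.sum Lrel).Formula (Fin m ⊕ K),
        FirstOrder.Language.BoundedFormula.IsQF ψ ∧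
        ∀ a : Fin m → K, φ.Realize (Sum.elim a id) ↔ ψ.Realize (Sum.elim a id))
    (hterm : ∀ (m s : ℕ) (t : Fin s → (FirstOrder.Language.ring.sum Lrel).Term (Fin m ⊕ K)),
      Continuous fun (a : Fin m → K) (l : Fin s) => (t l).realize (Sum.elim a id))
    (hsingleton : ∀ a : K, IsClosed {x : Fin 1 → K | x 0 = a})
    (hrelK : ∀ (m k : ℕ) (R : Lrel.Relations m) (j : Fin k → Fin m), StrictMono j →
      IsOpen {b : Fin k → K | (∀ l, b l ≠ 0) ∧
        FirstOrder.Language.Structure.RelMap R (Function.extend j b 0)} ∧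
      IsOpen {b : Fin k → K | (∀ l, b l ≠ 0) ∧
        ¬ FirstOrder.Language.Structure.RelMap R (Function.extend j b 0)})
    (hspecial : ∀ S : Set (Fin 1 → K), IsSpecialOpen Lrel K S → S.Nonempty → S.Infinite)
    {n : ℕ} (E : Set (Fin n → K))
    (hE : ∃ φ : (FirstOrder.Language.ring.sum Lrel).Formula (Fin n ⊕ K),
      E = {a : Fin n → K | φ.Realize (Sum.elim a id)})
    (hfr : (closure E \ E).Nonempty) :
    projDim (closure E \ E) < projDim E := by
  classical
  obtain ⟨φ, hφ⟩ := hE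
  haveI hT1 : T1Space K := t1_of_hsingleton hsingleton
  have hKinf : Infinite K := by
    have hsp : IsSpecialOpen Lrel K (Set.univ : Set (Fin 1 → K)) := by
      refine ⟨0, Fin.elim0, fun i => i.elim0, ?_⟩
      exact (Set.iInter_of_empty _).symm
    have huniv := hspecial _ hsp ⟨fun _ => 0, trivial⟩
    rw [Set.infinite_univ_iff] at huniv
    haveI : Infinite (Fin 1 → K) := huniv
    exact (Equiv.funUnique (Fin 1) K).infinite_iff.1 huniv
  haveI := hKinf
  have hnd : ¬ IsOpen ({(0:K)} : Set K) := by
    intro h0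
    haveI := discrete_of_zero_open h0
    haveI : DiscreteTopology (Fin n → K) := by infer_instance
    obtain ⟨x, hx⟩ := hfr
    rw [(isClosed_discrete E).closure_eq] at hx
    exact hx.2 hx.1
  obtain ⟨ψ, hψQF, hψ⟩ := hQE n φ
  obtain ⟨cs, hcs⟩ := qf_decomp hψQF
  have hEcells : E = cellsSet cs := by
    rw [hφ, ← hcs]
    ext a
    simp only [Set.mem_setOf_eq]
    exact hψ a
  have hEne : E.Nonempty := by
    by_contra hne
    rw [Set.not_nonempty_iff_eq_empty] at hne
    rw [hne] at hfr
    simp at hfr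
  have hbdd : ∀ (S : Set (Fin n → K)), BddAbove {k : ℕ | ∃ j : Fin k → Fin n, StrictMono j ∧
      (interior ((fun x : Fin n → K => x ∘ j) '' S)).Nonempty} := by
    intro S
    refine ⟨n, fun k hk => ?_⟩
    obtain ⟨j, hj, _⟩ := hk
    simpa using Fintype.card_le_of_injective j hj.injective
  have hD1 : 1 ≤ projDim E := by
    have h1 : ∃ i : Fin n, Indep E (fun _ : Fin 1 => i) := by
      by_contra hno
      push_neg at hno
      choose qi hqi0 hqi using fun i => not_indep_iff.1 (hno i)
      have hZfin : ∀ i : Fin n,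
          {c : K | MvPolynomial.eval (fun _ : Fin 1 => c) (qi i) = 0}.Finite := by
        intro i
        by_contra hinf
        apply hqi0 i
        apply poly_vanish_box
          (fun _ : Fin 1 => {c : K | MvPolynomial.eval (fun _ : Fin 1 => c) (qi i) = 0})
          (fun _ => hinf)
        intro a ha
        have h2 := ha 0 (Set.mem_univ 0)
        have haa : a = fun _ : Fin 1 => a 0 := by
          funext x
          rw [Subsingleton.elim x 0]
        rw [haa]
        exact h2
      have hEfin : E.Finite := by
        apply Set.Finite.subset (Set.Finite.pi fun i => hZfin i)
        intro x hx
        intro i _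
        exact hqi i x hx
      rw [(hEfin.isClosed).closure_eq] at hfr
      obtain ⟨x, hx⟩ := hfr
      exact hx.2 hx.1
    obtain ⟨i, hi⟩ := h1
    have hsm : StrictMono (fun _ : Fin 1 => i) :=
      fun a b h => absurd (Subsingleton.elim a b ▸ h) (lt_irrefl _)
    have hint := indep_to_interior hQE hrelK hφ hi
    exact le_csSup (hbdd E) ⟨_, hsm, hint⟩
  have hkey : ∀ k : ℕ, k ∈ {k : ℕ | ∃ j : Fin k → Fin n, StrictMono j ∧
      (interior ((fun x : Fin n → K => x ∘ j) '' (closure E \ E))).Nonempty} →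
      k + 1 ≤ projDim E := by
    rintro k ⟨j, hj, hint⟩
    have hindF : Indep (closure E \ E) j := interior_to_indep hnd hint
    set LC : List (Set (Fin n → K)) := cs.flatMap (fun c => c.actives.map (fun t =>
      closure c.set ∩ {a | MvPolynomial.eval a (tpoly t) = 0})) with hLC
    have hcover : closure E \ E ⊆ {a | ∃ S ∈ LC, a ∈ S} := by
      rintro x ⟨hxc, hxe⟩
      rw [hEcells, closure_cellsSet] at hxc
      obtain ⟨c, hc, hxcc⟩ := hxc
      have hxnc : x ∉ c.set := fun hxin => hxe (by rw [hEcells]; exact ⟨c, hc, hxin⟩)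
      obtain ⟨t, ht, ht0⟩ := cell_frontier hrelK c x ⟨hxcc, hxnc⟩
      refine ⟨closure c.set ∩ {a | MvPolynomial.eval a (tpoly t) = 0}, ?_, hxcc, ?_⟩
      · rw [hLC, List.mem_flatMap]
        exact ⟨c, hc, List.mem_map_of_mem ht⟩
      · rw [Set.mem_setOf_eq, ← tpoly_realize]
        exact ht0
    have hindU : Indep {a | ∃ S ∈ LC, a ∈ S} j := hindF.mono hcover
    obtain ⟨Sc, hScLC, hScind⟩ := indep_of_list hindU
    rw [hLC, List.mem_flatMap] at hScLC
    obtain ⟨c, hc, hSc⟩ := hScLC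
    rw [List.mem_map] at hSc
    obtain ⟨t, ht, rfl⟩ := hSc
    have hp : ∀ a ∈ c.set, MvPolynomial.eval a (tpoly t) ≠ 0 := by
      intro a ha h0
      exact actives_nonzero c t ht a ha (by rw [tpoly_realize]; exact h0)
    obtain ⟨i, hir, hind2⟩ := indep_extend hp hj.injective
      (Set.inter_subset_left) (fun a ha => ha.2) hScind
    have hsubE : c.set ⊆ E := by
      rw [hEcells]
      exact fun x hx => ⟨c, hc, hx⟩
    have hind3 : Indep E (Fin.cons i j : Fin (k+1) → Fin n) := hind2.mono hsubE
    obtain ⟨j', hj'sm, hj'ind⟩ := indep_sort (cons_injective hir hj.injective) hind3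
    have hint2 := indep_to_interior hQE hrelK hφ hj'ind
    exact le_csSup (hbdd E) ⟨j', hj'sm, hint2⟩
  show sSup _ < sSup _
  have hne0 : (0 : ℕ) ∈ {k : ℕ | ∃ j : Fin k → Fin n, StrictMono j ∧
      (interior ((fun x : Fin n → K => x ∘ j) '' (closure E \ E))).Nonempty} := by
    refine ⟨Fin.elim0, fun a => a.elim0, ?_⟩
    have huniv : (fun x : Fin n → K => x ∘ Fin.elim0) '' (closure E \ E) = Set.univ := by
      obtain ⟨x, hx⟩ := hfr
      ext y
      simp only [Set.mem_univ, iff_true]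
      exact ⟨x, hx, Subsingleton.elim _ _⟩
    rw [huniv, interior_univ]
    exact ⟨default, trivial⟩
  have hle : sSup {k : ℕ | ∃ j : Fin k → Fin n, StrictMono j ∧
      (interior ((fun x : Fin n → K => x ∘ j) '' (closure E \ E))).Nonempty} ≤
      projDim E - 1 := by
    apply csSup_le ⟨0, hne0⟩
    intro k hk
    have := hkey k hk
    omega
  calc sSup {k : ℕ | ∃ j : Fin k → Fin n, StrictMono j ∧
      (interior ((fun x : Fin n → K => x ∘ j) '' (closure E \ E))).Nonempty}
      ≤ projDim E - 1 := hle
    _ < projDim E := by omega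

end Glue

end PC7

/-- Let `L` be a language extending the language of rings whose only
function symbols are the ring ones (formalized as `L = ring ⊕ Lrel` with `Lrel`
relational), and let `K` be a field with a non-trivial valuation which is an
`L`-structure admitting quantifier elimination, such that the product topologies of the
valuation topology form a topological system, and such that every nonempty special open
subset of `K` is infinite.  Then for every `L`-definable subset `E` of `K^n` with
nonempty frontier `∂E = closure E \ E`, one has `dim (∂E) < dim E`. -/
theorem piecewise_continuity_statement_7
    {Lrel : FirstOrder.Language} [Lrel.IsRelational]
    {K Γ₀ : Type*} [Field K] [LinearOrderedCommGroupWithZero Γ₀] [Valued K Γ₀]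
    [FirstOrder.Ring.CompatibleRing K] [Lrel.Structure K]
    -- the valuation is non-trivial
    (hval : ∃ x : K, x ≠ 0 ∧ Valued.v x ≠ (1 : Γ₀))
    -- quantifier elimination with parameters from `K`
    (hQE : ∀ (m : ℕ) (φ : (FirstOrder.Language.ring.sum Lrel).Formula (Fin m ⊕ K)),
      ∃ ψ : (FirstOrder.Language.ring.sum Lrel).Formula (Fin m ⊕ K),
        FirstOrder.Language.BoundedFormula.IsQF ψ ∧
        ∀ a : Fin m → K, φ.Realize (Sum.elim a id) ↔ ψ.Realize (Sum.elim a id))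
    -- the product topologies of the valuation topology form a topological system
    (hterm : ∀ (m s : ℕ) (t : Fin s → (FirstOrder.Language.ring.sum Lrel).Term (Fin m ⊕ K)),
      Continuous fun (a : Fin m → K) (l : Fin s) => (t l).realize (Sum.elim a id))
    (hsingleton : ∀ a : K, IsClosed {x : Fin 1 → K | x 0 = a})
    (hrel : ∀ (m k : ℕ) (R : Lrel.Relations m) (j : Fin k → Fin m), StrictMono j →
      IsOpen {b : Fin k → K | (∀ l, b l ≠ 0) ∧
        FirstOrder.Language.Structure.RelMap R (Function.extend j b 0)} ∧
      IsOpen {b : Fin k → K | (∀ l, b l ≠ 0) ∧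
        ¬ FirstOrder.Language.Structure.RelMap R (Function.extend j b 0)})
    -- every nonempty special open subset of `K` is infinite
    (hspecial : ∀ S : Set (Fin 1 → K), IsSpecialOpen Lrel K S → S.Nonempty → S.Infinite)
    -- an `L`-definable set with parameters, with nonempty frontier
    {n : ℕ} (E : Set (Fin n → K))
    (hE : ∃ φ : (FirstOrder.Language.ring.sum Lrel).Formula (Fin n ⊕ K),
      E = {a : Fin n → K | φ.Realize (Sum.elim a id)})
    (hfr : (closure E \ E).Nonempty) :
    projDim (closure E \ E) < projDim E := by
  exact PC7.final_glue hval hQE hterm hsingleton hrel hspecial E hE hfr
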